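/- arXiv:1406.1107 — 2 statements merged into one kernel-verified Lean document; each statement's English description precedes it below -/
import Mathlib

section
/- For every positive integer k and every n ≥ 1, the function x ↦ |x|^{2k} on ℝⁿ satisfies (-Δ)^k |x|^{2k} = (-1)^k · 4^k · k! · (n/2)_k, a constant, where (q)_k = q(q+1)⋯(q+k-1) is the Pochhammer symbol. -/
open MeasureTheory

/-- The Laplacian of `f : ℝⁿ → ℝ` at `x`, as the sum of second partial derivatives. -/
noncomputable def lap {n : ℕ} (f : EuclideanSpace ℝ (Fin n) → ℝ)
    (x : EuclideanSpace ℝ (Fin n)) : ℝ :=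
  ∑ i : Fin n, fderiv ℝ (fun y => fderiv ℝ f y (EuclideanSpace.single i 1)) x
    (EuclideanSpace.single i 1)

/-- `(-Δ)^k`, the `k`-th iterate of the negative Laplacian. -/
noncomputable def negLapIter {n : ℕ} (k : ℕ) (f : EuclideanSpace ℝ (Fin n) → ℝ) :
    EuclideanSpace ℝ (Fin n) → ℝ :=
  (fun g x => -(lap g x))^[k] f

private lemma hasFDeriv_pow {n : ℕ} (m : ℕ) (y : EuclideanSpace ℝ (Fin n)) :
    HasFDerivAt (fun z : EuclideanSpace ℝ (Fin n) => (‖z‖^2)^m)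
      (((m : ℝ) * (‖y‖^2)^(m-1)) • (2 • innerSL ℝ y)) y :=
  (hasDerivAt_pow m (‖y‖^2)).comp_hasFDerivAt y (hasStrictFDerivAt_norm_sq y).hasFDerivAt

private lemma fderiv_cpow_apply {n : ℕ} (c : ℝ) (m : ℕ) (y : EuclideanSpace ℝ (Fin n)) (i : Fin n) :
    fderiv ℝ (fun z : EuclideanSpace ℝ (Fin n) => c * (‖z‖^2)^m) y (EuclideanSpace.single i 1)
      = (c * (2*m)) * ((‖y‖^2)^(m-1) * y i) := by
  rw [((hasFDeriv_pow m y).const_mul c).fderiv]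
  simp [EuclideanSpace.inner_single_right, real_inner_comm]
  ring

private lemma lap_const_mul_pow {n : ℕ} (c : ℝ) (m : ℕ) (hm : 1 ≤ m)
    (x : EuclideanSpace ℝ (Fin n)) :
    lap (fun y => c * (‖y‖^2)^m) x
      = c * (2*(m:ℝ)*(2*(m:ℝ) + (n:ℝ) - 2)) * (‖x‖^2)^(m-1) := by
  have hfe : ∀ i : Fin n, (fun y : EuclideanSpace ℝ (Fin n) =>
      fderiv ℝ (fun z => c * (‖z‖^2)^m) y (EuclideanSpace.single i 1))
      = (fun y : EuclideanSpace ℝ (Fin n) => (c*(2*(m:ℝ))) * ((‖y‖^2)^(m-1) * y i)) :=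
    fun i => funext fun y => fderiv_cpow_apply c m y i
  have h3 : ∀ i : Fin n,
      fderiv ℝ (fun y : EuclideanSpace ℝ (Fin n) => (c*(2*(m:ℝ))) * ((‖y‖^2)^(m-1) * y i)) x
        (EuclideanSpace.single i 1)
      = (c*(2*(m:ℝ))) * ((‖x‖^2)^(m-1)
          + (((m-1:ℕ):ℝ) * (‖x‖^2)^(m-1-1) * 2) * (x i * x i)) := by
    intro i
    have hmul : HasFDerivAt (fun y : EuclideanSpace ℝ (Fin n) => (‖y‖^2)^(m-1) * y i)
        (((‖x‖^2)^(m-1)) • (EuclideanSpace.proj i : EuclideanSpace ℝ (Fin n) →L[ℝ] ℝ)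
          + (x i) • ((((m-1:ℕ):ℝ) * (‖x‖^2)^(m-1-1)) • (2 • innerSL ℝ x))) x :=
      by
        have hproj : HasFDerivAt (fun y : EuclideanSpace ℝ (Fin n) => y i)
            (EuclideanSpace.proj i : EuclideanSpace ℝ (Fin n) →L[ℝ] ℝ) x :=
          (EuclideanSpace.proj (𝕜 := ℝ) i).hasFDerivAt
        exact (hasFDeriv_pow (m-1) x).mul hproj
    rw [(hmul.const_mul _).fderiv]
    simp [EuclideanSpace.inner_single_right, real_inner_comm]
    ring
  have hsum : ∑ i : Fin n, x i * x i = ‖x‖^2 := by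
    rw [← real_inner_self_eq_norm_sq]
    rw [PiLp.inner_apply]; simp [RCLike.inner_apply, mul_comm, sq]
  have key : ((m-1:ℕ):ℝ) * (‖x‖^2)^(m-1-1) * (‖x‖^2) = ((m:ℝ) - 1) * (‖x‖^2)^(m-1) := by
    rcases eq_or_lt_of_le hm with h | h
    · simp [← h]
    · have h2 : 2 ≤ m := h
      rw [mul_assoc, ← pow_succ]
      have : m - 1 - 1 + 1 = m - 1 := by omega
      rw [this, Nat.cast_sub hm]; push_cast; ring
  unfold lap
  simp only [hfe, h3]
  rw [Finset.sum_congr rfl (fun i _ => by ring :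
    ∀ i ∈ Finset.univ, (c*(2*(m:ℝ))) * ((‖x‖^2)^(m-1)
        + (((m-1:ℕ):ℝ) * (‖x‖^2)^(m-1-1) * 2) * (x i * x i))
      = (c*(2*(m:ℝ))) * (‖x‖^2)^(m-1)
        + (c*(2*(m:ℝ))) * (((m-1:ℕ):ℝ) * (‖x‖^2)^(m-1-1) * 2) * (x i * x i))]
  rw [Finset.sum_add_distrib, Finset.sum_const, ← Finset.mul_sum, hsum]
  simp only [Finset.card_univ, Fintype.card_fin, nsmul_eq_mul]
  rw [show c*(2*(m:ℝ)) * (((m-1:ℕ):ℝ) * (‖x‖^2)^(m-1-1) * 2) * (‖x‖^2)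
      = c*(2*(m:ℝ)) * 2 * (((m-1:ℕ):ℝ) * (‖x‖^2)^(m-1-1) * (‖x‖^2)) from by ring, key]
  ring

private lemma iter_pow {n : ℕ} (k : ℕ) : ∀ j, j ≤ k →
    negLapIter j (fun y : EuclideanSpace ℝ (Fin n) => (‖y‖^2)^k)
      = fun x => (∏ i ∈ Finset.range j,
          -((2*((k-i:ℕ):ℝ)) * (2*((k-i:ℕ):ℝ) + (n:ℝ) - 2))) * (‖x‖^2)^(k-j) := by
  intro j
  induction j with
  | zero => intro _; funext x; simp [negLapIter]
  | succ j ih =>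
    intro hj
    have hj' : j ≤ k := by omega
    have hstep : negLapIter (j+1) (fun y : EuclideanSpace ℝ (Fin n) => (‖y‖^2)^k)
        = fun x => -(lap (negLapIter j (fun y : EuclideanSpace ℝ (Fin n) => (‖y‖^2)^k)) x) := by
      funext x
      simp only [negLapIter, Function.iterate_succ_apply']
    rw [hstep, ih hj']
    funext x
    rw [lap_const_mul_pow _ (k-j) (by omega) x]
    rw [Finset.prod_range_succ]
    have h1 : k - (j+1) = (k - j) - 1 := by omega
    rw [h1]
    ring

private lemma poch_prod (k : ℕ) (q : ℝ) :
    (ascPochhammer ℝ k).eval q = ∏ j ∈ Finset.range k, (q + j) := by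
  induction k with
  | zero => simp
  | succ m ih => simp [ascPochhammer_succ_right, Finset.prod_range_succ, ih]

theorem stmt2 {n : ℕ} (hn : 1 ≤ n) (k : ℕ) (hk : 1 ≤ k) (x : EuclideanSpace ℝ (Fin n)) :
    negLapIter k (fun y => ‖y‖ ^ (2 * k)) x
      = (-1) ^ k * 4 ^ k * (k.factorial : ℝ)
        * (ascPochhammer ℝ k).eval ((n : ℝ) / 2) := by
  have hfun : (fun y : EuclideanSpace ℝ (Fin n) => ‖y‖ ^ (2*k))
      = fun y => (‖y‖^2)^k := funext fun y => pow_mul _ _ _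
  rw [hfun, iter_pow k k le_rfl]
  simp only [Nat.sub_self, pow_zero, mul_one]
  rw [poch_prod]
  have step1 : (∏ i ∈ Finset.range k,
      -((2*((k-i:ℕ):ℝ)) * (2*((k-i:ℕ):ℝ) + (n:ℝ) - 2)))
      = (-1)^k * ∏ i ∈ Finset.range k,
          ((2*((k-i:ℕ):ℝ)) * (2*((k-i:ℕ):ℝ) + (n:ℝ) - 2)) := by
    rw [show ((-1:ℝ))^k = ∏ _i ∈ Finset.range k, (-1:ℝ) by
      rw [Finset.prod_const, Finset.card_range], ← Finset.prod_mul_distrib]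
    exact Finset.prod_congr rfl fun i _ => by ring
  rw [step1]
  have step2 : (∏ i ∈ Finset.range k,
      ((2*((k-i:ℕ):ℝ)) * (2*((k-i:ℕ):ℝ) + (n:ℝ) - 2)))
      = ∏ j ∈ Finset.range k, ((2*((j:ℝ)+1)) * (2*((j:ℝ)+1) + (n:ℝ) - 2)) := by
    rw [← Finset.prod_range_reflect]
    refine Finset.prod_congr rfl fun j hj => ?_
    have hjk : j < k := Finset.mem_range.mp hj
    have : k - (k - 1 - j) = j + 1 := by omega
    rw [this]; push_cast; ring
  rw [step2]
  have step3 : (∏ j ∈ Finset.range k, ((2*((j:ℝ)+1)) * (2*((j:ℝ)+1) + (n:ℝ) - 2)))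
      = 4^k * (k.factorial : ℝ) * ∏ j ∈ Finset.range k, ((n:ℝ)/2 + j) := by
    have : ∀ j ∈ Finset.range k, (2*((j:ℝ)+1)) * (2*((j:ℝ)+1) + (n:ℝ) - 2)
        = 4 * (((j:ℝ)+1) * ((n:ℝ)/2 + j)) := fun j _ => by ring
    rw [Finset.prod_congr rfl this, Finset.prod_mul_distrib, Finset.prod_const,
      Finset.prod_mul_distrib, Finset.card_range]
    have hfac : (∏ j ∈ Finset.range k, ((j:ℝ)+1)) = (k.factorial : ℝ) := by
      rw [← Finset.prod_range_add_one_eq_factorial]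
      push_cast; rfl
    rw [hfac]; ring
  rw [step3]; ring
end

section
/- Fix ρ₀ > 0 and s ∈ (1,2), and for x ∈ (0, ρ₀/2) define J₁(x) = ∫_{1 - ρ₀/x}^{ρ₀/x - 1} (2 - (1+z)_+^s - (1-z)_+^s) / |z|^{1+s} dz, where t_+ = max(t, 0). Then lim_{x→0⁺} J₁(x) / log x = 2. -/
open Filter intervalIntegral

/-- The boundary-layer integral `J₁`. -/
noncomputable def J₁ (ρ₀ s x : ℝ) : ℝ :=
  ∫ z in (1 - ρ₀ / x)..(ρ₀ / x - 1),
    (2 - max (1 + z) 0 ^ s - max (1 - z) 0 ^ s) / |z| ^ (1 + s)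

namespace Stmt8Aux

open Real MeasureTheory Set

/-- The integrand. -/
noncomputable def F (s z : ℝ) : ℝ :=
  (2 - max (1 + z) 0 ^ s - max (1 - z) 0 ^ s) / |z| ^ (1 + s)

lemma F_even (s z : ℝ) : F s (-z) = F s z := by
  unfold F
  rw [abs_neg]
  have h1 : 1 + -z = 1 - z := by ring
  have h2 : 1 - -z = 1 + z := by ring
  rw [h1, h2]
  ring

lemma num_continuous {s : ℝ} (hs : 0 < s) :
    Continuous (fun z : ℝ => 2 - max (1 + z) 0 ^ s - max (1 - z) 0 ^ s) := by
  have c1 : Continuous (fun z : ℝ => max (1 + z) 0 ^ s) :=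
    ((continuous_const.add continuous_id).max continuous_const).rpow_const
      (fun x => Or.inr hs.le)
  have c2 : Continuous (fun z : ℝ => max (1 - z) 0 ^ s) :=
    ((continuous_const.sub continuous_id).max continuous_const).rpow_const
      (fun x => Or.inr hs.le)
  exact (continuous_const.sub c1).sub c2

lemma F_measurable {s : ℝ} (hs : 0 < s) : Measurable (F s) :=
  (num_continuous hs).measurable.div
    ((continuous_abs.rpow_const (fun x => Or.inr (by linarith))).measurable)

lemma F_contOn {s : ℝ} (hs : 0 < s) {t : Set ℝ} (ht : ∀ z ∈ t, z ≠ 0) :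
    ContinuousOn (F s) t := by
  apply ContinuousOn.div (num_continuous hs).continuousOn
    ((continuous_abs.rpow_const (fun x => Or.inr (by linarith))).continuousOn)
  intro z hz
  exact (Real.rpow_pos_of_pos (abs_pos.2 (ht z hz)) _).ne'


end Stmt8Aux

open Real MeasureTheory Set

noncomputable def phi (s z : ℝ) : ℝ := 2 - (1 + z) ^ s - (1 - z) ^ s
noncomputable def D (s t : ℝ) : ℝ := s * (1 - t) ^ (s - 1) - s * (1 + t) ^ (s - 1)

lemma hasDerivAt_phi {s : ℝ} (hs1 : 1 ≤ s) (t : ℝ) :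
    HasDerivAt (phi s) (D s t) t := by
  have h1 : HasDerivAt (fun z : ℝ => (1 + z) ^ s) (s * (1 + t) ^ (s - 1)) t := by
    have := (Real.hasDerivAt_rpow_const (x := 1 + t) (p := s) (Or.inr hs1)).comp t
      ((hasDerivAt_id t).const_add 1)
    simp at this; exact this
  have h2 : HasDerivAt (fun z : ℝ => (1 - z) ^ s) (-(s * (1 - t) ^ (s - 1))) t := by
    have := (Real.hasDerivAt_rpow_const (x := 1 - t) (p := s) (Or.inr hs1)).comp t
      ((hasDerivAt_id t).const_sub 1)
    simp at this; exact this
  have := ((hasDerivAt_const t (2:ℝ)).sub h1).sub h2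
  rw [show D s t = 0 - s * (1 + t) ^ (s - 1) - -(s * (1 - t) ^ (s - 1)) by unfold D; ring]
  exact this

lemma D_continuous {s : ℝ} (hs1 : 1 ≤ s) : Continuous (D s) := by
  unfold D
  have c1 : Continuous (fun t : ℝ => (1 - t) ^ (s - 1)) :=
    (Real.continuous_rpow_const (by linarith)).comp (continuous_const.sub continuous_id)
  have c2 : Continuous (fun t : ℝ => (1 + t) ^ (s - 1)) :=
    (Real.continuous_rpow_const (by linarith)).comp (continuous_const.add continuous_id)
  exact (continuous_const.mul c1).sub (continuous_const.mul c2)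

lemma key_diff {s : ℝ} (hs : s ∈ Set.Ioo (1:ℝ) 2) {u : ℝ} (hu : u ∈ Icc (0:ℝ) 1) :
    (1 + u) ^ (s - 1) - (1 - u) ^ (s - 1) ∈ Icc 0 (s * u) := by
  obtain ⟨hu0, hu1⟩ := hu
  constructor
  · have := Real.rpow_le_rpow (by linarith : (0:ℝ) ≤ 1 - u) (by linarith : 1 - u ≤ 1 + u)
      (by linarith [hs.1] : (0:ℝ) ≤ s - 1)
    linarith
  · have hup : (1 + u) ^ (s - 1) ≤ 1 + (s - 1) * u :=
      rpow_one_add_le_one_add_mul_self (by linarith) (by linarith [hs.1]) (by linarith [hs.2])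
    have hlow : 1 - u ≤ (1 - u) ^ (s - 1) := by
      rcases eq_or_lt_of_le hu1 with h | h
      · rw [h]; norm_num; exact Real.rpow_nonneg le_rfl _
      · have := Real.rpow_le_rpow_of_exponent_ge (by linarith : (0:ℝ) < 1 - u)
          (by linarith : 1 - u ≤ 1) (by linarith [hs.2] : s - 1 ≤ 1)
        simpa using this
    linarith

lemma D_bound {s : ℝ} (hs : s ∈ Set.Ioo (1:ℝ) 2) {t : ℝ} (ht : t ∈ Icc (-1:ℝ) 1) :
    |D s t| ≤ s ^ 2 * |t| := by
  have hs0 : (0:ℝ) < s := by linarith [hs.1]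
  rcases le_total 0 t with h | h
  · have hk := key_diff hs ⟨h, ht.2⟩
    have habs : |t| = t := abs_of_nonneg h
    unfold D
    rw [abs_sub_comm, habs]
    rw [abs_of_nonneg (by nlinarith [hk.1] : (0:ℝ) ≤ s * (1 + t) ^ (s-1) - s * (1 - t) ^ (s-1))]
    nlinarith [hk.2]
  · have hk := key_diff hs (u := -t) ⟨by linarith, by linarith [ht.1]⟩
    have habs : |t| = -t := abs_of_nonpos h
    unfold D
    rw [habs]
    have e1 : 1 - t = 1 + -t := by ring
    have e2 : 1 + t = 1 - -t := by ring
    rw [e1, e2]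
    rw [abs_of_nonneg (by nlinarith [hk.1] : (0:ℝ) ≤ s * (1 + -t) ^ (s-1) - s * (1 - -t) ^ (s-1))]
    nlinarith [hk.2]

lemma phi_bound {s : ℝ} (hs : s ∈ Set.Ioo (1:ℝ) 2) {z : ℝ} (hz : z ∈ Icc (-1:ℝ) 1) :
    |phi s z| ≤ s ^ 2 * z ^ 2 := by
  have h0 : phi s 0 = 0 := by simp [phi]; norm_num
  have hftc : ∫ t in (0:ℝ)..z, D s t = phi s z - phi s 0 :=
    intervalIntegral.integral_eq_sub_of_hasDerivAt
      (fun t _ => hasDerivAt_phi (le_of_lt hs.1) t)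
      ((D_continuous (le_of_lt hs.1)).continuousOn.intervalIntegrable)
  have hb : ∀ t ∈ Set.uIoc (0:ℝ) z, ‖D s t‖ ≤ s ^ 2 * |z| := by
    intro t ht
    have htz : |t| ≤ |z| := by
      rcases le_or_gt 0 z with h | h
      · rw [Set.uIoc_of_le h] at ht
        rw [abs_of_nonneg (le_of_lt ht.1), abs_of_nonneg h]; exact ht.2
      · rw [Set.uIoc_of_ge h.le] at ht
        rw [abs_of_nonpos ht.2, abs_of_neg h]; linarith [ht.1]
    have ht1 : t ∈ Icc (-1:ℝ) 1 := by
      have : |z| ≤ 1 := abs_le.2 ⟨hz.1, hz.2⟩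
      have := htz.trans this
      exact abs_le.1 this
    calc ‖D s t‖ = |D s t| := rfl
      _ ≤ s ^ 2 * |t| := D_bound hs ht1
      _ ≤ s ^ 2 * |z| := by nlinarith [sq_nonneg s]
  have := intervalIntegral.norm_integral_le_of_norm_le_const hb
  rw [hftc, h0, sub_zero] at this
  calc |phi s z| = ‖phi s z‖ := rfl
    _ ≤ s ^ 2 * |z| * |z - 0| := this
    _ = s ^ 2 * z ^ 2 := by rw [sub_zero, mul_assoc, abs_mul_abs_self]; ring

lemma abs_rpow_intInt {r : ℝ} (hr : -1 < r) (a b : ℝ) :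
    IntervalIntegrable (fun z : ℝ => |z| ^ r) volume a b := by
  have H : ∀ c : ℝ, 0 ≤ c → IntervalIntegrable (fun z : ℝ => |z| ^ r) volume 0 c := by
    intro c hc
    apply (intervalIntegrable_rpow' (a := 0) (b := c) hr).mono_fun'
      ((measurable_abs.pow_const r).aestronglyMeasurable)
    rw [Set.uIoc_of_le hc]
    filter_upwards [ae_restrict_mem measurableSet_Ioc] with z hz
    rw [Real.norm_eq_abs, abs_of_nonneg (Real.rpow_nonneg (abs_nonneg z) r),
      abs_of_pos hz.1]
  have H' : ∀ c : ℝ, IntervalIntegrable (fun z : ℝ => |z| ^ r) volume 0 c := by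
    intro c
    rcases le_total 0 c with h | h
    · exact H c h
    · rw [IntervalIntegrable.iff_comp_neg]
      simp only [abs_neg, neg_zero]
      exact H (-c) (by linarith)
  exact (H' a).symm.trans (H' b)
lemma F_int_pm1 {s : ℝ} (hs : s ∈ Set.Ioo (1:ℝ) 2) :
    IntervalIntegrable (Stmt8Aux.F s) volume (-1) 1 := by
  have hs0 : (0:ℝ) < s := by linarith [hs.1]
  have hg : IntervalIntegrable (fun z : ℝ => s ^ 2 * |z| ^ (1 - s)) volume (-1) 1 :=
    (abs_rpow_intInt (by linarith [hs.2]) (-1) 1).const_mul _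
  apply hg.mono_fun' ((Stmt8Aux.F_measurable hs0).aestronglyMeasurable)
  have hz0 : ∀ᵐ z ∂(volume.restrict (Set.uIoc (-1:ℝ) 1)), z ≠ 0 := by
    apply ae_restrict_of_ae
    rw [MeasureTheory.ae_iff]
    have : {a : ℝ | ¬a ≠ 0} = {0} := by ext z; simp
    rw [this]
    exact measure_singleton 0
  filter_upwards [hz0, ae_restrict_mem measurableSet_uIoc] with z hz hzI
  have hzIcc : z ∈ Set.Icc (-1:ℝ) 1 := by
    have : Set.uIoc (-1:ℝ) 1 ⊆ Set.Icc (-1) 1 := by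
      rw [Set.uIoc_of_le (by norm_num : (-1:ℝ) ≤ 1)]
      exact Set.Ioc_subset_Icc_self
    exact this hzI
  have habs : (0:ℝ) < |z| := abs_pos.2 hz
  have hFeq : Stmt8Aux.F s z = phi s z / |z| ^ (1 + s) := by
    unfold Stmt8Aux.F phi
    rw [max_eq_left (by linarith [hzIcc.1] : (0:ℝ) ≤ 1 + z),
      max_eq_left (by linarith [hzIcc.2] : (0:ℝ) ≤ 1 - z)]
  have hden : (0:ℝ) < |z| ^ (1 + s) := Real.rpow_pos_of_pos habs _
  rw [Real.norm_eq_abs, hFeq, abs_div, abs_of_pos hden]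
  have hnum : |phi s z| ≤ s ^ 2 * z ^ 2 := phi_bound hs hzIcc
  have harith : s ^ 2 * z ^ 2 / |z| ^ (1 + s) = s ^ 2 * |z| ^ (1 - s) := by
    have h2 : z ^ 2 = |z| ^ ((2:ℝ)) := by
      rw [show ((2:ℝ)) = ((2:ℕ):ℝ) by norm_num, Real.rpow_natCast, sq_abs]
    rw [h2, mul_div_assoc, ← Real.rpow_sub habs]
    ring_nf
  calc |phi s z| / |z| ^ (1 + s) ≤ s ^ 2 * z ^ 2 / |z| ^ (1 + s) := by
        gcongr
    _ = s ^ 2 * |z| ^ (1 - s) := harith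

lemma diff_bound {s : ℝ} (hs : s ∈ Set.Ioo (1:ℝ) 2) {z : ℝ} (hz : 1 ≤ z) :
    (1 + z) ^ s - z ^ s ≤ s * 2 ^ (s - 1) * z ^ (s - 1) := by
  have hs0 : (0:ℝ) < s := by linarith [hs.1]
  have hz0 : (0:ℝ) < z := by linarith
  have hftc : ∫ t in z..(z + 1), s * t ^ (s - 1) = (z + 1) ^ s - z ^ s := by
    apply intervalIntegral.integral_eq_sub_of_hasDerivAt
      (f := fun t : ℝ => t ^ s) (f' := fun t : ℝ => s * t ^ (s - 1))
    · intro t ht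
      rw [Set.uIcc_of_le (by linarith : z ≤ z + 1)] at ht
      exact Real.hasDerivAt_rpow_const (Or.inl (by intro hc; rw [hc] at ht; linarith [ht.1]))
    · exact (continuous_const.mul
        (Real.continuous_rpow_const (by linarith [hs.1]))).continuousOn.intervalIntegrable
  have hb : ∀ t ∈ Set.uIoc z (z + 1), ‖s * t ^ (s - 1)‖ ≤ s * 2 ^ (s - 1) * z ^ (s - 1) := by
    intro t ht
    rw [Set.uIoc_of_le (by linarith : z ≤ z + 1)] at ht
    have ht0 : (0:ℝ) < t := lt_trans hz0 ht.1
    rw [Real.norm_eq_abs, abs_of_nonneg (by positivity)]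
    have h1 : t ^ (s - 1) ≤ (2 * z) ^ (s - 1) := by
      apply Real.rpow_le_rpow ht0.le (by linarith [ht.2]) (by linarith [hs.1])
    have h2 : (2 * z) ^ (s - 1) = 2 ^ (s - 1) * z ^ (s - 1) :=
      Real.mul_rpow (by norm_num) hz0.le
    calc s * t ^ (s - 1) ≤ s * (2 * z) ^ (s - 1) := by nlinarith
      _ = s * 2 ^ (s - 1) * z ^ (s - 1) := by rw [h2]; ring
  have := intervalIntegral.norm_integral_le_of_norm_le_const hb
  rw [hftc] at this
  have h' : |((z+1):ℝ) ^ s - z ^ s| ≤ s * 2 ^ (s-1) * z ^ (s-1) * |z + 1 - z| := this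
  rw [show z + 1 - z = (1:ℝ) by ring, abs_one, mul_one] at h'
  have := abs_le.1 h'
  calc (1 + z) ^ s - z ^ s = (z + 1) ^ s - z ^ s := by ring_nf
    _ ≤ s * 2 ^ (s-1) * z ^ (s-1) := this.2

lemma g_bound {s : ℝ} (hs : s ∈ Set.Ioo (1:ℝ) 2) {z : ℝ} (hz : 1 ≤ z) :
    |Stmt8Aux.F s z + z⁻¹| ≤ 6 * (z ^ 2)⁻¹ := by
  have hs0 : (0:ℝ) < s := by linarith [hs.1]
  have hz0 : (0:ℝ) < z := by linarith
  have hzs : (0:ℝ) < z ^ (1 + s) := Real.rpow_pos_of_pos hz0 _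
  have hFeq : Stmt8Aux.F s z = (2 - (1 + z) ^ s) / z ^ (1 + s) := by
    unfold Stmt8Aux.F
    rw [max_eq_left (by linarith : (0:ℝ) ≤ 1 + z),
      max_eq_right (by linarith : 1 - z ≤ (0:ℝ)),
      Real.zero_rpow (ne_of_gt hs0), abs_of_pos hz0]
    ring_nf
  have hsplit : z ^ (1 + s) = z * z ^ s := by
    rw [Real.rpow_add hz0, Real.rpow_one]
  have hinv : z⁻¹ = z ^ s / z ^ (1 + s) := by
    rw [hsplit]
    field_simp
  have hgeq : Stmt8Aux.F s z + z⁻¹ = (2 - (1 + z) ^ s + z ^ s) / z ^ (1 + s) := by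
    rw [hFeq, hinv, ← add_div]
  have hdb := diff_bound hs hz
  have hzs1 : (1:ℝ) ≤ z ^ (s - 1) := by
    have := Real.rpow_le_rpow (zero_le_one) hz (by linarith [hs.1] : (0:ℝ) ≤ s - 1)
    rwa [Real.one_rpow] at this
  have h2s : (2:ℝ) ^ (s - 1) ≤ 2 := by
    have := Real.rpow_le_rpow_of_exponent_le (by norm_num : (1:ℝ) ≤ 2)
      (by linarith [hs.2] : s - 1 ≤ 1)
    rwa [Real.rpow_one] at this
  have hmono : z ^ s ≤ (1 + z) ^ s :=
    Real.rpow_le_rpow hz0.le (by linarith) hs0.le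
  have hnum : |2 - (1 + z) ^ s + z ^ s| ≤ 6 * z ^ (s - 1) := by
    rw [abs_le]
    constructor
    · have hzpow : (0:ℝ) ≤ z ^ (s - 1) := Real.rpow_nonneg hz0.le _
      have h2pos : (0:ℝ) < 2 ^ (s - 1) := Real.rpow_pos_of_pos (by norm_num) _
      have h4 : s * 2 ^ (s - 1) * z ^ (s - 1) ≤ 4 * z ^ (s - 1) := by
        nlinarith [mul_nonneg (mul_nonneg (by linarith [hs.2] : (0:ℝ) ≤ 2 - s) h2pos.le) hzpow,
          mul_nonneg (by linarith [h2s] : (0:ℝ) ≤ 2 - 2 ^ (s - 1)) hzpow]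
      linarith [hdb, h4, hzs1]
    · nlinarith [hmono, hzs1]
  have harith : z ^ (s - 1) / z ^ (1 + s) = (z ^ 2)⁻¹ := by
    rw [← Real.rpow_sub hz0]
    have : s - 1 - (1 + s) = (-2 : ℝ) := by ring
    rw [this, Real.rpow_neg hz0.le, show ((2:ℝ)) = ((2:ℕ):ℝ) by norm_num,
      Real.rpow_natCast]
  rw [hgeq, abs_div, abs_of_pos hzs]
  calc |2 - (1 + z) ^ s + z ^ s| / z ^ (1 + s) ≤ 6 * z ^ (s - 1) / z ^ (1 + s) := by gcongr
    _ = 6 * (z ^ 2)⁻¹ := by rw [mul_div_assoc, harith]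

lemma g_contOn {s : ℝ} (hs : s ∈ Set.Ioo (1:ℝ) 2) {R : ℝ} (hR : 1 ≤ R) :
    ContinuousOn (fun z : ℝ => Stmt8Aux.F s z + z⁻¹) (Set.uIcc 1 R) := by
  have h1 : Set.uIcc (1:ℝ) R = Set.Icc 1 R := Set.uIcc_of_le hR
  rw [h1]
  have hne : ∀ z ∈ Set.Icc (1:ℝ) R, z ≠ 0 := fun z hz => by
    have := hz.1; intro hc; rw [hc] at this; linarith
  exact (Stmt8Aux.F_contOn (by linarith [hs.1]) hne).add
    (ContinuousOn.inv₀ continuousOn_id hne)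

lemma int_sq_inv {R : ℝ} (hR : 1 ≤ R) :
    ∫ z in (1:ℝ)..R, (z ^ 2)⁻¹ = 1 - R⁻¹ := by
  have hftc : ∫ z in (1:ℝ)..R, (z ^ 2)⁻¹ = -R⁻¹ - -(1:ℝ)⁻¹ := by
    apply intervalIntegral.integral_eq_sub_of_hasDerivAt
    · intro t ht
      rw [Set.uIcc_of_le hR] at ht
      have ht0 : t ≠ 0 := by intro hc; rw [hc] at ht; linarith [ht.1]
      have := (hasDerivAt_inv ht0).neg; simp only [neg_neg] at this; exact this
    · apply ContinuousOn.intervalIntegrable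
      apply ContinuousOn.inv₀ (continuousOn_pow 2)
      intro t ht
      rw [Set.uIcc_of_le hR] at ht
      have : (0:ℝ) < t := by linarith [ht.1]
      positivity
  rw [hftc]; ring

lemma intg_bound {s : ℝ} (hs : s ∈ Set.Ioo (1:ℝ) 2) {R : ℝ} (hR : 1 ≤ R) :
    |∫ z in (1:ℝ)..R, (Stmt8Aux.F s z + z⁻¹)| ≤ 6 := by
  have hIg : IntervalIntegrable (fun z : ℝ => Stmt8Aux.F s z + z⁻¹) volume 1 R :=
    (g_contOn hs hR).intervalIntegrable
  have hI6 : IntervalIntegrable (fun z : ℝ => 6 * (z ^ 2)⁻¹) volume 1 R := by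
    apply ContinuousOn.intervalIntegrable
    apply ContinuousOn.mul continuousOn_const
    apply ContinuousOn.inv₀ (continuousOn_pow 2)
    intro t ht
    rw [Set.uIcc_of_le hR] at ht
    have : (0:ℝ) < t := by linarith [ht.1]
    positivity
  calc |∫ z in (1:ℝ)..R, (Stmt8Aux.F s z + z⁻¹)|
      ≤ ∫ z in (1:ℝ)..R, |Stmt8Aux.F s z + z⁻¹| :=
        intervalIntegral.abs_integral_le_integral_abs hR
    _ ≤ ∫ z in (1:ℝ)..R, 6 * (z ^ 2)⁻¹ := by
        apply intervalIntegral.integral_mono_on hR hIg.abs hI6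
        intro z hz
        exact g_bound hs hz.1
    _ = 6 * (1 - R⁻¹) := by
        rw [intervalIntegral.integral_const_mul, int_sq_inv hR]
    _ ≤ 6 := by
        have : (0:ℝ) ≤ R⁻¹ := by positivity
        nlinarith

lemma J_eq {ρ₀ s x : ℝ} (hρ₀ : 0 < ρ₀) (hs : s ∈ Set.Ioo (1:ℝ) 2)
    (hx : x ∈ Set.Ioo 0 (ρ₀ / 2)) :
    J₁ ρ₀ s x = (∫ z in (-1:ℝ)..1, Stmt8Aux.F s z)
      + 2 * (∫ z in (1:ℝ)..(ρ₀ / x - 1), (Stmt8Aux.F s z + z⁻¹))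
      - 2 * Real.log (ρ₀ / x - 1) := by
  obtain ⟨hx0, hx2⟩ := hx
  set R := ρ₀ / x - 1 with hRdef
  have hR1 : 1 < R := by
    have h2 : 2 < ρ₀ / x := by
      rw [lt_div_iff₀ hx0]; linarith
    simp only [hRdef]; linarith
  have hs0 : (0:ℝ) < s := by linarith [hs.1]
  have hne1R : ∀ z ∈ Set.uIcc (1:ℝ) R, z ≠ 0 := by
    intro z hz
    rw [Set.uIcc_of_le hR1.le] at hz
    intro hc; rw [hc] at hz; linarith [hz.1]
  have h1R : IntervalIntegrable (Stmt8Aux.F s) volume 1 R :=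
    (Stmt8Aux.F_contOn hs0 hne1R).intervalIntegrable
  have hIneg : IntervalIntegrable (Stmt8Aux.F s) volume (-R) (-1) := by
    have := (IntervalIntegrable.iff_comp_neg (f := Stmt8Aux.F s) (a := 1) (b := R) (by simp)).mp h1R
    simp only [Stmt8Aux.F_even] at this
    exact this.symm
  have hIm : IntervalIntegrable (Stmt8Aux.F s) volume (-1) 1 := F_int_pm1 hs
  have hJ : J₁ ρ₀ s x = ∫ z in (-R)..R, Stmt8Aux.F s z := by
    unfold J₁
    have : 1 - ρ₀ / x = -R := by simp only [hRdef]; ring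
    rw [this]
    rfl
  have eq1 : (∫ z in (-R)..(-1:ℝ), Stmt8Aux.F s z) + (∫ z in (-1:ℝ)..R, Stmt8Aux.F s z)
      = ∫ z in (-R)..R, Stmt8Aux.F s z :=
    intervalIntegral.integral_add_adjacent_intervals hIneg (hIm.trans h1R)
  have eq2 : (∫ z in (-1:ℝ)..1, Stmt8Aux.F s z) + (∫ z in (1:ℝ)..R, Stmt8Aux.F s z)
      = ∫ z in (-1:ℝ)..R, Stmt8Aux.F s z :=
    intervalIntegral.integral_add_adjacent_intervals hIm h1R
  have eq3 : (∫ z in (-R)..(-1:ℝ), Stmt8Aux.F s z) = ∫ z in (1:ℝ)..R, Stmt8Aux.F s z := by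
    have := intervalIntegral.integral_comp_neg (a := 1) (b := R) (fun z => Stmt8Aux.F s z)
    simp only [Stmt8Aux.F_even] at this
    rw [← this]
  have hIinv : IntervalIntegrable (fun z : ℝ => z⁻¹) volume 1 R :=
    (ContinuousOn.inv₀ continuousOn_id hne1R).intervalIntegrable
  have eq4 : (∫ z in (1:ℝ)..R, Stmt8Aux.F s z)
      = (∫ z in (1:ℝ)..R, (Stmt8Aux.F s z + z⁻¹)) - ∫ z in (1:ℝ)..R, z⁻¹ := by
    rw [intervalIntegral.integral_add h1R hIinv]
    ring
  have eq5 : (∫ z in (1:ℝ)..R, z⁻¹) = Real.log R := by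
    rw [integral_inv_of_pos one_pos (by linarith : (0:ℝ) < R), div_one]
  rw [hJ, ← eq1, eq3, ← eq2, eq4, eq5]
  ring

open Topology in
private lemma aux_div (a b c : ℝ) (hc : c ≠ 0) :
    (a - 2 * (b - c)) / c = a * c⁻¹ - 2 * b * c⁻¹ + 2 := by
  field_simp
  ring

open Topology in
theorem stmt8 (ρ₀ s : ℝ) (hρ₀ : 0 < ρ₀) (hs : s ∈ Set.Ioo (1 : ℝ) 2) :
    Tendsto (fun x => J₁ ρ₀ s x / Real.log x)
      (nhdsWithin 0 (Set.Ioo 0 (ρ₀ / 2))) (nhds 2) := by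
  set l := nhdsWithin (0:ℝ) (Set.Ioo 0 (ρ₀ / 2)) with hl
  set C₀ : ℝ := ∫ z in (-1:ℝ)..1, Stmt8Aux.F s z with hC₀
  set E : ℝ → ℝ := fun x => ∫ z in (1:ℝ)..(ρ₀ / x - 1), (Stmt8Aux.F s z + z⁻¹) with hE
  have h_log_bot : Tendsto Real.log l atBot :=
    Real.tendsto_log_nhdsGT_zero.mono_left
      (nhdsWithin_mono 0 Set.Ioo_subset_Ioi_self)
  have hinv : Tendsto (fun x => (Real.log x)⁻¹) l (𝓝 0) := by
    have h1 : Tendsto (fun x => -Real.log x) l atTop := tendsto_neg_atTop_iff.mpr h_log_bot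
    have h2 := h1.inv_tendsto_atTop
    have h3 := h2.neg
    simp only [Pi.inv_apply, inv_neg, neg_neg, neg_zero] at h3
    exact h3
  have hsub : Tendsto (fun x : ℝ => ρ₀ - x) l (𝓝 ρ₀) := by
    have h : Tendsto (fun x : ℝ => ρ₀ - x) (nhds 0) (nhds (ρ₀ - 0)) :=
      Continuous.tendsto (by continuity) 0
    rw [sub_zero] at h
    exact h.mono_left nhdsWithin_le_nhds
  have hlog2 : Tendsto (fun x : ℝ => Real.log (ρ₀ - x)) l (𝓝 (Real.log ρ₀)) :=
    ((Real.continuousAt_log hρ₀.ne').tendsto).comp hsub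
  have hev1 : ∀ᶠ x in l, x < (1:ℝ) := by
    apply Filter.eventually_of_mem
      (nhdsWithin_le_nhds (isOpen_Iio.mem_nhds (by norm_num : (0:ℝ) ∈ Set.Iio 1)))
    intro x hx; exact hx
  have hmem : ∀ᶠ x in l, x ∈ Set.Ioo (0:ℝ) (ρ₀ / 2) := self_mem_nhdsWithin
  have heq : ∀ᶠ x in l, J₁ ρ₀ s x / Real.log x
      = (C₀ + 2 * E x) * (Real.log x)⁻¹
        - 2 * Real.log (ρ₀ - x) * (Real.log x)⁻¹ + 2 := by
    filter_upwards [hmem, hev1] with x hx hx1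
    have hx0 : 0 < x := hx.1
    have hlogx : Real.log x < 0 := Real.log_neg hx0 hx1
    have hlogne : Real.log x ≠ 0 := ne_of_lt hlogx
    have hρx : 0 < ρ₀ - x := by have := hx.2; linarith
    have hRlog : Real.log (ρ₀ / x - 1) = Real.log (ρ₀ - x) - Real.log x := by
      have hrw : ρ₀ / x - 1 = (ρ₀ - x) / x := by field_simp
      rw [hrw, Real.log_div hρx.ne' hx0.ne']
    rw [J_eq hρ₀ hs hx, hRlog]
    exact aux_div (C₀ + 2 * E x) (Real.log (ρ₀ - x)) (Real.log x) hlogne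
  have t1 : Tendsto (fun x => (C₀ + 2 * E x) * (Real.log x)⁻¹) l (𝓝 0) := by
    apply squeeze_zero_norm' (a := fun x => (|C₀| + 12) * |(Real.log x)⁻¹|)
    · filter_upwards [hmem] with x hx
      have hx0 : 0 < x := hx.1
      have hR1 : (1:ℝ) ≤ ρ₀ / x - 1 := by
        have h2 : (2:ℝ) ≤ ρ₀ / x := by
          rw [le_div_iff₀ hx0]; linarith [hx.2]
        linarith
      have hEb : |E x| ≤ 6 := intg_bound hs hR1
      rw [norm_mul, Real.norm_eq_abs, Real.norm_eq_abs]
      have hb : |C₀ + 2 * E x| ≤ |C₀| + 12 := by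
        calc |C₀ + 2 * E x| ≤ |C₀| + |2 * E x| := abs_add_le _ _
          _ ≤ |C₀| + 12 := by rw [abs_mul]; simp only [abs_two]; linarith
      exact mul_le_mul_of_nonneg_right hb (abs_nonneg _)
    · have h := tendsto_const_nhds (x := (|C₀| + 12)) (f := l) |>.mul hinv.abs
      simpa using h
  have t2 : Tendsto (fun x => 2 * Real.log (ρ₀ - x) * (Real.log x)⁻¹) l (𝓝 0) := by
    have h := (tendsto_const_nhds (x := (2:ℝ)) (f := l) |>.mul hlog2).mul hinv
    simpa using h
  have hfin := (t1.sub t2).add (tendsto_const_nhds (x := (2:ℝ)) (f := l))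
  simp only [zero_sub, neg_zero, zero_add] at hfin
  have heq' : (fun x => J₁ ρ₀ s x / Real.log x) =ᶠ[l]
      (fun x => (C₀ + 2 * E x) * (Real.log x)⁻¹
        - 2 * Real.log (ρ₀ - x) * (Real.log x)⁻¹ + 2) := heq
  exact Filter.Tendsto.congr' heq'.symm hfin
end
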